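/- Let (K;φ) be a distal topological dynamical system. If there exists a φ-invariant Borel probability measure μ on K that is ergodic for φ and fully supported, then (K;φ) is minimal. -/

import Mathlib

open MeasureTheory

noncomputable def homeoZPow {K : Type*} [TopologicalSpace K] (φ : K ≃ₜ K) (n : ℤ) : K → K :=
  ⇑(φ.toEquiv ^ n : Equiv.Perm K)

section aux
variable {K : Type*} [TopologicalSpace K] (φ : K ≃ₜ K)

lemma homeoZPow_comp (a b : ℤ) (x : K) :
    homeoZPow φ a (homeoZPow φ b x) = homeoZPow φ (a + b) x := by
  simp [homeoZPow, ← Equiv.Perm.mul_apply, ← zpow_add]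

lemma homeoZPow_zero (x : K) : homeoZPow φ 0 x = x := by simp [homeoZPow]

lemma homeoZPow_one : homeoZPow φ 1 = ⇑φ := by
  funext x; simp [homeoZPow]

lemma homeoZPow_negOne : homeoZPow φ (-1) = ⇑φ.symm := by
  funext x; simp [homeoZPow]

lemma homeoZPow_continuous (n : ℤ) : Continuous (homeoZPow φ n) := by
  induction n using Int.induction_on with
  | zero =>
    have : homeoZPow φ 0 = id := funext fun x => homeoZPow_zero φ x
    rw [this]; exact continuous_id
  | succ n ih =>
    have : homeoZPow φ (n + 1) = homeoZPow φ n ∘ ⇑φ := by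
      funext x
      have : (⇑φ : K → K) x = homeoZPow φ 1 x := by rw [homeoZPow_one]
      simp only [Function.comp_apply, this, homeoZPow_comp]
    rw [this]; exact ih.comp φ.continuous
  | pred n ih =>
    have : homeoZPow φ (-n - 1) = homeoZPow φ (-n) ∘ ⇑φ.symm := by
      funext x
      have : (⇑φ.symm : K → K) x = homeoZPow φ (-1) x := by rw [homeoZPow_negOne]
      simp only [Function.comp_apply, this, homeoZPow_comp, sub_eq_add_neg]
    rw [this]; exact ih.comp φ.symm.continuous

end aux

section ellis
set_option linter.unusedSectionVars false
variable {K : Type*} [TopologicalSpace K] [CompactSpace K] [T2Space K] (φ : K ≃ₜ K)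

/-- composition by a power on the left stays in the enveloping semigroup -/
lemma pow_comp_mem_E (n : ℤ) {h : K → K} (hh : h ∈ closure (Set.range (homeoZPow φ))) :
    homeoZPow φ n ∘ h ∈ closure (Set.range (homeoZPow φ)) := by
  have hcont : Continuous (fun k : K → K => homeoZPow φ n ∘ k) :=
    continuous_pi fun x => (homeoZPow_continuous φ n).comp (continuous_apply x)
  have h1 : homeoZPow φ n ∘ h ∈
      closure ((fun k : K → K => homeoZPow φ n ∘ k) '' Set.range (homeoZPow φ)) :=
    image_closure_subset_closure_image hcont ⟨h, hh, rfl⟩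
  refine closure_mono ?_ h1
  rintro _ ⟨_, ⟨m, rfl⟩, rfl⟩
  exact ⟨n + m, by funext x; simp [Function.comp_apply, homeoZPow_comp]⟩

lemma comp_mem_E {g h : K → K} (hg : g ∈ closure (Set.range (homeoZPow φ)))
    (hh : h ∈ closure (Set.range (homeoZPow φ))) :
    g ∘ h ∈ closure (Set.range (homeoZPow φ)) := by
  have hρ : Continuous (fun k : K → K => k ∘ h) :=
    continuous_pi fun x => continuous_apply (h x)
  have hT : IsClosed ((fun k : K → K => k ∘ h) ⁻¹' closure (Set.range (homeoZPow φ))) :=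
    isClosed_closure.preimage hρ
  have hsub : Set.range (homeoZPow φ) ⊆
      (fun k : K → K => k ∘ h) ⁻¹' closure (Set.range (homeoZPow φ)) := by
    rintro _ ⟨n, rfl⟩
    exact pow_comp_mem_E φ n hh
  exact (closure_minimal hsub hT) hg

lemma E_inj
    (hdistal : ∀ x y : K,
      (∃ z : K, (z, z) ∈
        closure {w : K × K | ∃ n : ℤ, w = (homeoZPow φ n x, homeoZPow φ n y)}) → x = y)
    {g : K → K} (hg : g ∈ closure (Set.range (homeoZPow φ))) :
    Function.Injective g := by
  intro a b hab
  refine hdistal a b ⟨g a, ?_⟩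
  have hQ : Continuous (fun k : K → K => (k a, k b)) :=
    (continuous_apply a).prodMk (continuous_apply b)
  have h1 : (g a, g b) ∈
      closure ((fun k : K → K => (k a, k b)) '' Set.range (homeoZPow φ)) :=
    image_closure_subset_closure_image hQ ⟨g, hg, rfl⟩
  have h2 : (fun k : K → K => (k a, k b)) '' Set.range (homeoZPow φ) ⊆
      {w : K × K | ∃ n : ℤ, w = (homeoZPow φ n a, homeoZPow φ n b)} := by
    rintro _ ⟨_, ⟨n, rfl⟩, rfl⟩; exact ⟨n, rfl⟩
  have := closure_mono h2 h1
  rwa [← hab] at this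

lemma exists_leftInv
    (hdistal : ∀ x y : K,
      (∃ z : K, (z, z) ∈
        closure {w : K × K | ∃ n : ℤ, w = (homeoZPow φ n x, homeoZPow φ n y)}) → x = y)
    {g : K → K} (hg : g ∈ closure (Set.range (homeoZPow φ))) :
    ∃ g' ∈ closure (Set.range (homeoZPow φ)), g' ∘ g = id := by
  classical
  letI : Semigroup (K → K) := { mul := fun a b => a ∘ b, mul_assoc := fun _ _ _ => rfl }
  have hmul : ∀ a b : K → K, a * b = a ∘ b := fun _ _ => rfl
  have hid : (id : K → K) ∈ closure (Set.range (homeoZPow φ)) :=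
    subset_closure ⟨0, funext fun x => (homeoZPow_zero φ x).symm⟩
  set E := closure (Set.range (homeoZPow φ)) with hE
  have hEcomp : IsCompact E := isClosed_closure.isCompact
  have hmulleft : ∀ r : K → K, Continuous (· * r) := by
    intro r
    simp only [hmul]
    exact continuous_pi fun x => continuous_apply (r x)
  set s : Set (K → K) := (fun k : K → K => k ∘ g) '' E with hs
  have hsne : s.Nonempty := ⟨g, id, hid, rfl⟩
  have hscomp : IsCompact s :=
    hEcomp.image (continuous_pi fun x => continuous_apply (g x))
  have hsE : s ⊆ E := by rintro _ ⟨a, ha, rfl⟩; exact comp_mem_E φ ha hg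
  have hsmul : ∀ x ∈ s, ∀ y ∈ s, x * y ∈ s := by
    rintro _ ⟨a, ha, rfl⟩ _ ⟨b, hb, rfl⟩
    exact ⟨a ∘ (g ∘ b), comp_mem_E φ ha (comp_mem_E φ hg hb), by rw [hmul]; rfl⟩
  obtain ⟨u, hus, huu⟩ :=
    exists_idempotent_in_compact_subsemigroup hmulleft s hsne hscomp hsmul
  have huE : u ∈ E := hsE hus
  have huinj : Function.Injective u := E_inj φ hdistal huE
  have huid : u = id := by
    rw [hmul] at huu
    funext x
    exact huinj (congrFun huu x)
  obtain ⟨a, haE, hag⟩ := hus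
  exact ⟨a, haE, by simpa [huid] using hag⟩

end ellis

/-- A distal topological dynamical system carrying a fully supported ergodic
invariant Borel probability measure is minimal. -/
theorem distal_with_fully_supported_ergodic_measure_minimal
    {K : Type*} [TopologicalSpace K] [CompactSpace K] [T2Space K] [Nonempty K]
    [MeasurableSpace K] [BorelSpace K]
    (φ : K ≃ₜ K)
    (hdistal : ∀ x y : K,
      (∃ z : K, (z, z) ∈
        closure {w : K × K | ∃ n : ℤ, w = (homeoZPow φ n x, homeoZPow φ n y)}) → x = y)
    (μ : Measure K) [IsProbabilityMeasure μ]
    (hμ_inv : Measure.map φ μ = μ)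
    (hμ_erg : ∀ A : Set K, MeasurableSet A → φ ⁻¹' A = A → μ A = 0 ∨ μ A = 1)
    (hμ_supp : ∀ U : Set K, IsOpen U → U.Nonempty → 0 < μ U) :
    ∀ M : Set K, IsClosed M → φ '' M = M → M = ∅ ∨ M = Set.univ := by
  intro M hMclosed hMinv
  rcases M.eq_empty_or_nonempty with h | ⟨x₀, hx₀⟩
  · exact Or.inl h
  right
  by_contra hMne
  obtain ⟨p, hp⟩ : ∃ p, p ∉ M := by
    by_contra h; push_neg at h; exact hMne (Set.eq_univ_iff_forall.mpr h)
  -- invariance of M under all powers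
  have hφmem : ∀ x, x ∈ M → φ x ∈ M := fun x hx => hMinv ▸ Set.mem_image_of_mem φ hx
  have hφmem' : ∀ x, φ x ∈ M → x ∈ M := by
    intro x hx
    rw [← hMinv] at hx
    obtain ⟨x', hx', he⟩ := hx
    rwa [← φ.injective he]
  have hsymmem : ∀ x, x ∈ M → φ.symm x ∈ M := by
    intro x hx; apply hφmem'; rwa [φ.apply_symm_apply]
  have hPmem : ∀ n : ℤ, ∀ x ∈ M, homeoZPow φ n x ∈ M := by
    intro n
    induction n using Int.induction_on with
    | zero => intro x hx; rwa [homeoZPow_zero]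
    | succ n ih =>
      intro x hx
      have he : homeoZPow φ (n + 1) x = homeoZPow φ n (φ x) := by
        have h1 : (⇑φ : K → K) x = homeoZPow φ 1 x := by rw [homeoZPow_one]
        rw [h1, homeoZPow_comp]
      rw [he]; exact ih _ (hφmem x hx)
    | pred n ih =>
      intro x hx
      have he : homeoZPow φ (-n - 1) x = homeoZPow φ (-n) (φ.symm x) := by
        have h1 : (⇑φ.symm : K → K) x = homeoZPow φ (-1) x := by rw [homeoZPow_negOne]
        rw [h1, homeoZPow_comp, sub_eq_add_neg]
      rw [he]; exact ih _ (hsymmem x hx)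
  -- Urysohn function
  obtain ⟨f, hf0, hf1, -⟩ :=
    exists_continuous_zero_one_of_isClosed hMclosed (isClosed_singleton (x := p))
      (Set.disjoint_singleton_right.mpr hp)
  -- the factor map
  set F : K → (ℤ → ℝ) := fun x n => f (homeoZPow φ n x) with hF
  have hFcont : Continuous F :=
    continuous_pi fun n => f.continuous.comp (homeoZPow_continuous φ n)
  have hFshift : ∀ w w' : K, F w = F w' → ∀ k : ℤ, F (homeoZPow φ k w) = F (homeoZPow φ k w') := by
    intro w w' h k
    funext n
    show f (homeoZPow φ n (homeoZPow φ k w)) = f (homeoZPow φ n (homeoZPow φ k w'))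
    rw [homeoZPow_comp, homeoZPow_comp]
    exact congrFun h (n + k)
  -- countable basis downstairs
  obtain ⟨b, hbc, -, hb⟩ := TopologicalSpace.exists_countable_basis (ℤ → ℝ)
  set W : Set (ℤ → ℝ) → Set K := fun B => {x | ∃ n : ℤ, F (homeoZPow φ n x) ∈ B} with hW
  have hWopen : ∀ B, IsOpen B → IsOpen (W B) := by
    intro B hB
    have : W B = ⋃ n : ℤ, (fun x => F (homeoZPow φ n x)) ⁻¹' B := by
      ext x; simp [hW]
    rw [this]
    exact isOpen_iUnion fun n => hB.preimage (hFcont.comp (homeoZPow_continuous φ n))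
  have hkey : ∀ (n : ℤ) (x : K), homeoZPow φ n (φ x) = homeoZPow φ (n + 1) x := by
    intro n x
    have h1 : (⇑φ : K → K) x = homeoZPow φ 1 x := by rw [homeoZPow_one]
    rw [h1, homeoZPow_comp]
  have hWinv : ∀ B, φ ⁻¹' (W B) = W B := by
    intro B
    ext x
    constructor
    · rintro ⟨n, hn⟩
      rw [hkey] at hn
      exact ⟨n + 1, hn⟩
    · rintro ⟨n, hn⟩
      refine ⟨n - 1, ?_⟩
      show F (homeoZPow φ (n - 1) (φ x)) ∈ B
      rw [hkey, sub_add_cancel]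
      exact hn
  -- invariant open sets W B have measure one
  have hWone : ∀ B ∈ b, (F ⁻¹' B).Nonempty → μ (W B) = 1 := by
    intro B hBb hBne
    have hBopen := hb.isOpen hBb
    rcases hμ_erg (W B) ((hWopen B hBopen).measurableSet) (hWinv B) with h0 | h1
    · exfalso
      have hsub : F ⁻¹' B ⊆ W B := by
        intro x hx
        exact ⟨0, by rwa [homeoZPow_zero]⟩
      have hpos : 0 < μ (F ⁻¹' B) := hμ_supp _ (hBopen.preimage hFcont) hBne
      have := measure_mono (μ := μ) hsub
      rw [h0] at this
      exact absurd (le_antisymm this zero_le) (ne_of_gt hpos)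
    · exact h1
  -- a point with dense F-orbit
  set D : Set K := {x | ∀ B ∈ b, (F ⁻¹' B).Nonempty → x ∈ W B} with hD
  obtain ⟨xs, hxs⟩ : D.Nonempty := by
    rw [Set.nonempty_iff_ne_empty]
    intro hDempty
    have hcompl : Dᶜ ⊆ ⋃ B ∈ {B ∈ b | (F ⁻¹' B).Nonempty}, (W B)ᶜ := by
      intro x hx
      simp only [hD, Set.mem_compl_iff, Set.mem_setOf_eq, not_forall] at hx
      obtain ⟨B, hBb, hBne, hxW⟩ := hx
      exact Set.mem_biUnion ⟨hBb, hBne⟩ hxW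
    have hnull : μ (⋃ B ∈ {B ∈ b | (F ⁻¹' B).Nonempty}, (W B)ᶜ) = 0 := by
      refine (measure_biUnion_null_iff (μ := μ) (hbc.mono (Set.sep_subset _ _))).mpr ?_
      rintro B ⟨hBb, hBne⟩
      have h1 := hWone B hBb hBne
      have := measure_compl ((hWopen B (hb.isOpen hBb)).measurableSet)
        (measure_ne_top μ (W B))
      rw [h1, measure_univ] at this
      simpa using this
    have : μ Dᶜ = 0 := measure_mono_null hcompl hnull
    rw [hDempty, Set.compl_empty, measure_univ] at this
    exact one_ne_zero this
  -- density of the orbit of xs in F(K)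
  have hdense : ∀ w : K, F w ∈ closure (Set.range fun k : ℤ => F (homeoZPow φ k xs)) := by
    intro w
    rw [mem_closure_iff]
    intro O hO hwO
    obtain ⟨B, hBb, hwB, hBO⟩ := hb.exists_subset_of_mem_open hwO hO
    obtain ⟨k, hk⟩ := hxs B hBb ⟨w, hwB⟩
    exact ⟨F (homeoZPow φ k xs), hBO hk, ⟨k, rfl⟩⟩
  -- ultrafilter on ℤ pushing the orbit of xs to F x₀
  set e : ℤ → (ℤ → ℝ) := fun k => F (homeoZPow φ k xs) with he
  obtain ⟨U, hrange, hUle⟩ := mem_closure_iff_ultrafilter.mp (hdense x₀)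
  have hcomap : (Filter.comap e ↑U).NeBot := by
    rw [Filter.comap_neBot_iff]
    intro t ht
    obtain ⟨z, hz⟩ := Ultrafilter.nonempty_of_mem (Filter.inter_mem ht hrange)
    obtain ⟨a, rfl⟩ := hz.2
    exact ⟨a, hz.1⟩
  set N : Ultrafilter ℤ := Ultrafilter.of (Filter.comap e ↑U) with hN
  have hNtend : Filter.Tendsto e ↑N (nhds (F x₀)) := by
    calc Filter.map e ↑N ≤ Filter.map e (Filter.comap e ↑U) :=
          Filter.map_mono (Ultrafilter.of_le _)
      _ ≤ ↑U := Filter.map_comap_le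
      _ ≤ nhds (F x₀) := hUle
  -- the ultrafilter limit g of the powers along N
  have hglim : ∀ w : K, ∃ z : K, Filter.Tendsto (fun k : ℤ => homeoZPow φ k w) ↑N (nhds z) := by
    intro w
    obtain ⟨z, -, hz⟩ := isCompact_univ.ultrafilter_le_nhds
      (N.map (fun k : ℤ => homeoZPow φ k w)) (by simp)
    exact ⟨z, hz⟩
  choose g hgt using hglim
  have hgE : g ∈ closure (Set.range (homeoZPow φ)) :=
    mem_closure_of_tendsto (tendsto_pi_nhds.mpr hgt)
      (Filter.Eventually.of_forall fun k => Set.mem_range_self k)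
  -- F (g xs) = F x₀
  have hFg : F (g xs) = F x₀ := by
    funext k
    have h2 : Filter.Tendsto (fun n : ℤ => f (homeoZPow φ k (homeoZPow φ n xs))) ↑N
        (nhds (f (homeoZPow φ k (g xs)))) :=
      ((f.continuous.comp (homeoZPow_continuous φ k)).tendsto _).comp (hgt xs)
    have h3 : Filter.Tendsto (fun n : ℤ => e n k) ↑N (nhds (F x₀ k)) :=
      (tendsto_pi_nhds.mp hNtend) k
    have heq : (fun n : ℤ => e n k) = fun n : ℤ => f (homeoZPow φ k (homeoZPow φ n xs)) := rfl
    rw [heq] at h3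
    exact tendsto_nhds_unique h2 h3
  -- left inverse of g
  obtain ⟨g', hg'E, hg'g⟩ := exists_leftInv φ hdistal hgE
  -- F xs lies in F '' M
  have hFMclosed : IsClosed (F '' M) := (hMclosed.isCompact.image hFcont).isClosed
  have hxsFM : F xs ∈ F '' M := by
    have hTh : Continuous (fun h : K → K => F (h (g xs))) :=
      hFcont.comp (continuous_apply (g xs))
    have h1 : F (g' (g xs)) ∈
        closure ((fun h : K → K => F (h (g xs))) '' Set.range (homeoZPow φ)) :=
      image_closure_subset_closure_image hTh ⟨g', hg'E, rfl⟩
    have himg : (fun h : K → K => F (h (g xs))) '' Set.range (homeoZPow φ) ⊆ F '' M := by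
      rintro _ ⟨_, ⟨k, rfl⟩, rfl⟩
      show F (homeoZPow φ k (g xs)) ∈ F '' M
      rw [hFshift _ _ hFg k]
      exact ⟨homeoZPow φ k x₀, hPmem k x₀ hx₀, rfl⟩
    have h2 : F (g' (g xs)) ∈ F '' M := closure_minimal himg hFMclosed h1
    have h3 : g' (g xs) = xs := congrFun hg'g xs
    rwa [h3] at h2
  -- hence F p lies in F '' M
  obtain ⟨xM, hxM, hFxM⟩ := hxsFM
  have hpFM : F p ∈ F '' M := by
    have hsub : (Set.range fun k : ℤ => F (homeoZPow φ k xs)) ⊆ F '' M := by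
      rintro _ ⟨k, rfl⟩
      show F (homeoZPow φ k xs) ∈ F '' M
      rw [← hFshift _ _ hFxM k]
      exact ⟨homeoZPow φ k xM, hPmem k xM hxM, rfl⟩
    exact closure_minimal hsub hFMclosed (hdense p)
  obtain ⟨q, hq, hFq⟩ := hpFM
  have h0 := congrFun hFq 0
  have hq0 : F q 0 = 0 := by
    show f (homeoZPow φ 0 q) = 0
    rw [homeoZPow_zero]
    exact hf0 hq
  have hp0 : F p 0 = 1 := by
    show f (homeoZPow φ 0 p) = 1
    rw [homeoZPow_zero]
    exact hf1 rfl
  rw [hq0, hp0] at h0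
  exact zero_ne_one h0
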